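/- (Equilibrium growth rates of the stochastic logistic equation.) Let k > 0, θ > 0, r > 0. Let X be a real random variable distributed as Gamma(k, θ), and let ε be a square-integrable real random variable independent of X with E[ε] = 1 and Var(ε) = v. Set Y = r·X·(1−X)·ε. If E[Y] = E[X] = kθ and Var(Y) = Var(X) = kθ², then r = (2k + 4 + (k + 1)·√((1 − v(k + 2))/(v + 1)))/(k + 3) or r = (2k + 4 − (k + 1)·√((1 − v(k + 2))/(v + 1)))/(k + 3). -/

import Mathlib

open MeasureTheory ProbabilityTheory Real
open scoped ENNReal NNReal

lemma my_gamma_moment {a rr : ℝ} (ha : 0 < a) (hrr : 0 < rr) (n : ℕ) :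
    Integrable (fun x : ℝ => x ^ n) (gammaMeasure a rr) ∧
      ∫ x, x ^ n ∂(gammaMeasure a rr) = Gamma (a + n) / Gamma a * (1 / rr) ^ n := by
  have han : (0:ℝ) < a + n := by positivity
  set c : ℝ := rr ^ a / Gamma a with hc
  have hc0 : 0 < c := by
    have := Real.rpow_pos_of_pos hrr a
    have := Real.Gamma_pos_of_pos ha
    positivity
  have hint : IntegrableOn (fun x : ℝ => x ^ (a + n - 1) * exp (-(rr * x))) (Set.Ioi 0) := by
    have h := integrableOn_rpow_mul_exp_neg_mul_rpow (p := 1) (s := a + n - 1) (b := rr)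
      (by linarith) one_pos hrr
    refine h.congr_fun (fun x hx => ?_) measurableSet_Ioi
    dsimp only
    rw [Real.rpow_one, neg_mul]
  have hval : ∫ x in Set.Ioi 0, x ^ (a + n - 1) * exp (-(rr * x))
      = (1/rr) ^ (a + n) * Gamma (a + n) := integral_rpow_mul_exp_neg_mul_Ioi han hrr
  have hmeaseq : gammaMeasure a rr
      = volume.withDensity (fun x => ((gammaPDFReal a rr x).toNNReal : ℝ≥0∞)) := rfl
  have hgm : Measurable fun x => (gammaPDFReal a rr x).toNNReal :=
    (measurable_gammaPDFReal a rr).real_toNNReal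
  have hsmul : (fun x : ℝ => (gammaPDFReal a rr x).toNNReal • x ^ n)
      = fun x => gammaPDFReal a rr x * x ^ n := by
    funext x
    rw [NNReal.smul_def, smul_eq_mul, Real.coe_toNNReal _ (gammaPDFReal_nonneg ha hrr x)]
  have hae0 : ∀ᵐ x : ℝ, x ≠ 0 := by
    have h0 : (volume : Measure ℝ) {(0:ℝ)} = 0 := measure_singleton 0
    rw [ae_iff]
    simpa using h0
  have hGeq : (fun x => gammaPDFReal a rr x * x ^ n)
      =ᵐ[volume] (Set.Ioi 0).indicator (fun x => c * (x ^ (a+n-1) * exp (-(rr*x)))) := by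
    filter_upwards [hae0] with x hx
    rcases lt_or_gt_of_ne hx with h | h
    · rw [Set.indicator_of_notMem (by simp [h.not_gt]), gammaPDFReal, if_neg (not_le.mpr h),
        zero_mul]
    · rw [Set.indicator_of_mem (Set.mem_Ioi.mpr h), gammaPDFReal, if_pos h.le]
      rw [show x ^ (a + n - 1) = x ^ (a-1) * x ^ (n:ℝ) by
        rw [← Real.rpow_add h]; ring_nf, Real.rpow_natCast]
      ring
  have hI : Integrable ((Set.Ioi 0).indicator fun x => c * (x ^ (a+n-1) * exp (-(rr*x)))) volume := by
    rw [integrable_indicator_iff measurableSet_Ioi]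
    exact hint.const_mul c
  constructor
  · rw [hmeaseq, integrable_withDensity_iff_integrable_smul hgm, hsmul]
    exact hI.congr hGeq.symm
  · rw [hmeaseq, integral_withDensity_eq_integral_smul hgm, hsmul, integral_congr_ae hGeq,
      integral_indicator measurableSet_Ioi, integral_const_mul, hval]
    have h1 : (1/rr) ^ (a + (n:ℝ)) = (1/rr) ^ a * (1/rr) ^ (n:ℝ) :=
      Real.rpow_add (by positivity) _ _
    have h2 : rr ^ a * (1/rr) ^ a = 1 := by
      rw [← Real.mul_rpow hrr.le (by positivity), mul_one_div_cancel hrr.ne', Real.one_rpow]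
    rw [hc, h1, Real.rpow_natCast]
    have h3 : rr ^ a / Gamma a * ((1/rr) ^ a * (1/rr) ^ n * Gamma (a + n))
        = (rr ^ a * (1/rr) ^ a) * (Gamma (a + n) / Gamma a * (1/rr) ^ n) := by ring
    rw [h3, h2, one_mul]

/-- Equilibrium growth rates of the stochastic logistic equation:
Let `k, θ, r > 0`, `X ~ Gamma(k, θ)` (rate `1/θ`), `ε` square-integrable, independent of `X`,
with `E[ε] = 1` and `Var(ε) = v`, and set `Y = r·X·(1−X)·ε`. If `E[Y] = E[X] = kθ` and
`Var(Y) = Var(X) = kθ²`, then `r = (2k + 4 ± (k + 1)·√((1 − v(k + 2))/(v + 1)))/(k + 3)`. -/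
theorem stmt6 {Ω : Type*} {mΩ : MeasurableSpace Ω} (μ : Measure Ω) [IsProbabilityMeasure μ]
    (k θ r v : ℝ) (hk : 0 < k) (hθ : 0 < θ) (hr : 0 < r)
    (X ε : Ω → ℝ) (hXm : Measurable X)
    (hX : Measure.map X μ = gammaMeasure k θ⁻¹)
    (hε : MemLp ε 2 μ) (hindep : IndepFun ε X μ)
    (hεmean : ∫ ω, ε ω ∂μ = 1) (hεvar : variance ε μ = v)
    (Y : Ω → ℝ) (hY : Y = fun ω => r * X ω * (1 - X ω) * ε ω)
    (hmean₁ : ∫ ω, Y ω ∂μ = ∫ ω, X ω ∂μ) (hmean₂ : ∫ ω, X ω ∂μ = k * θ)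
    (hvar₁ : variance Y μ = variance X μ) (hvar₂ : variance X μ = k * θ ^ 2) :
    r = (2 * k + 4 + (k + 1) * Real.sqrt ((1 - v * (k + 2)) / (v + 1))) / (k + 3) ∨
      r = (2 * k + 4 - (k + 1) * Real.sqrt ((1 - v * (k + 2)) / (v + 1))) / (k + 3) := by
  -- moments of X under μ
  have hXpow : ∀ n : ℕ, Integrable (fun ω => X ω ^ n) μ ∧
      ∫ ω, X ω ^ n ∂μ = Gamma (k + n) / Gamma k * θ ^ n := by
    intro n
    have h := my_gamma_moment hk (inv_pos.mpr hθ) n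
    have hsm : AEStronglyMeasurable (fun x : ℝ => x ^ n) (Measure.map X μ) :=
      (measurable_id.pow_const n).aestronglyMeasurable
    constructor
    · refine (integrable_map_measure hsm hXm.aemeasurable).mp ?_
      rw [hX]; exact h.1
    · calc ∫ ω, X ω ^ n ∂μ = ∫ x, x ^ n ∂(Measure.map X μ) :=
            (integral_map hXm.aemeasurable hsm).symm
        _ = Gamma (k + n) / Gamma k * θ ^ n := by rw [hX, h.2, one_div, inv_inv]
  have hΓk : (0:ℝ) < Gamma k := Real.Gamma_pos_of_pos hk
  have g1 : Gamma (k + 1) = k * Gamma k := Real.Gamma_add_one hk.ne'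
  have g2 : Gamma (k + 2) = (k+1) * (k * Gamma k) := by
    rw [show k + 2 = (k+1) + 1 by ring, Real.Gamma_add_one (by positivity), g1]
  have g3 : Gamma (k + 3) = (k+2) * ((k+1) * (k * Gamma k)) := by
    rw [show k + 3 = (k+2) + 1 by ring, Real.Gamma_add_one (by positivity), g2]
  have g4 : Gamma (k + 4) = (k+3) * ((k+2) * ((k+1) * (k * Gamma k))) := by
    rw [show k + 4 = (k+3) + 1 by ring, Real.Gamma_add_one (by positivity), g3]
  have M1 : ∫ ω, X ω ^ 1 ∂μ = k * θ := by
    have h := (hXpow 1).2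
    push_cast at h
    rw [h, g1]; field_simp
  have M2 : ∫ ω, X ω ^ 2 ∂μ = (k+1) * k * θ^2 := by
    have h := (hXpow 2).2
    push_cast at h
    rw [h, g2]; field_simp
  have M3 : ∫ ω, X ω ^ 3 ∂μ = (k+2) * ((k+1) * k) * θ^3 := by
    have h := (hXpow 3).2
    push_cast at h
    rw [h, g3]; field_simp
  have M4 : ∫ ω, X ω ^ 4 ∂μ = (k+3) * ((k+2) * ((k+1) * k)) * θ^4 := by
    have h := (hXpow 4).2
    push_cast at h
    rw [h, g4]; field_simp
  -- the factor X(1-X)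
  set gX : Ω → ℝ := fun ω => X ω * (1 - X ω) with hgX
  have hgm : Measurable fun x : ℝ => x * (1 - x) :=
    measurable_id.mul (measurable_const.sub measurable_id)
  have hgXm : Measurable gX := hXm.mul (measurable_const.sub hXm)
  have hgX1 : gX = fun ω => X ω ^ 1 - X ω ^ 2 := by funext ω; simp only [hgX]; ring
  have int_gX : Integrable gX μ := by rw [hgX1]; exact (hXpow 1).1.sub (hXpow 2).1
  have IgX : ∫ ω, gX ω ∂μ = k*θ - (k+1)*k*θ^2 := by
    rw [hgX1, integral_sub (hXpow 1).1 (hXpow 2).1, M1, M2]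
  have hgX2 : (fun ω => gX ω ^ 2) = fun ω => (X ω ^ 2 - 2 * X ω ^ 3) + X ω ^ 4 := by
    funext ω; simp only [hgX]; ring
  have int_sub : Integrable (fun ω => X ω ^ 2 - 2 * X ω ^ 3) μ :=
    (hXpow 2).1.sub ((hXpow 3).1.const_mul 2)
  have int_gX2 : Integrable (fun ω => gX ω ^ 2) μ := by
    rw [hgX2]; exact int_sub.add (hXpow 4).1
  have IgX2 : ∫ ω, gX ω ^ 2 ∂μ
      = ((k+1)*k*θ^2 - 2*((k+2)*((k+1)*k)*θ^3)) + (k+3)*((k+2)*((k+1)*k))*θ^4 := by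
    rw [hgX2, integral_add int_sub (hXpow 4).1,
      integral_sub (hXpow 2).1 ((hXpow 3).1.const_mul 2), integral_const_mul, M2, M3, M4]
  -- facts about ε
  have int_ε : Integrable ε μ := hε.integrable one_le_two
  have int_ε2 : Integrable (fun ω => ε ω ^ 2) μ :=
    (memLp_two_iff_integrable_sq hε.aestronglyMeasurable).mp hε
  have hv0 : 0 ≤ v := hεvar ▸ variance_nonneg ε μ
  have Iε2 : ∫ ω, ε ω ^ 2 ∂μ = v + 1 := by
    have h := variance_eq_sub hε
    rw [hεvar, hεmean] at h
    have h2 : ∫ x, (ε ^ 2) x ∂μ = ∫ ω, ε ω ^ 2 ∂μ := rfl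
    rw [h2] at h
    linarith
  -- independence
  have ind1 : IndepFun gX ε μ := hindep.symm.comp hgm measurable_id
  have ind2 : IndepFun (fun ω => gX ω ^ 2) (fun ω => ε ω ^ 2) μ :=
    hindep.symm.comp (hgm.pow_const 2) (measurable_id.pow_const 2)
  -- mean of Y
  have hEY : ∫ ω, Y ω ∂μ = r * ((k*θ - (k+1)*k*θ^2) * 1) := by
    have h0 : Y = fun ω => r * ((gX * ε) ω) := by
      funext ω; rw [hY]; simp only [Pi.mul_apply, hgX]; ring
    rw [h0, integral_const_mul,
      ind1.integral_mul_eq_mul_integral int_gX.1 int_ε.1, IgX, hεmean]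
  have hA : r * ((k*θ - (k+1)*k*θ^2) * 1) = k * θ := by
    rw [← hEY, hmean₁, hmean₂]
  -- second moment of Y
  have memgXε : MemLp (fun ω => gX ω * ε ω) 2 μ := by
    have hsm : AEStronglyMeasurable (fun ω => gX ω * ε ω) μ :=
      hgXm.aestronglyMeasurable.mul hε.aestronglyMeasurable
    rw [memLp_two_iff_integrable_sq hsm]
    have he : (fun ω => (gX ω * ε ω)^2)
        = (fun ω => gX ω ^ 2) * (fun ω => ε ω ^ 2) := by funext ω; simp [Pi.mul_apply]; ring
    rw [he]
    exact ind2.integrable_mul int_gX2 int_ε2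
  have memY : MemLp Y 2 μ := by
    have h0 : Y = fun ω => r * (gX ω * ε ω) := by
      funext ω; rw [hY]; simp only [hgX]; ring
    rw [h0]; exact memgXε.const_mul r
  have hEY2 : ∫ ω, Y ω ^ 2 ∂μ
      = r^2 * ((((k+1)*k*θ^2 - 2*((k+2)*((k+1)*k)*θ^3)) + (k+3)*((k+2)*((k+1)*k))*θ^4) * (v+1)) := by
    have h0 : (fun ω => Y ω ^ 2)
        = fun ω => r^2 * (((fun ω => gX ω ^ 2) * (fun ω => ε ω ^ 2)) ω) := by
      funext ω; rw [hY]; simp only [Pi.mul_apply, hgX]; ring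
    rw [h0, integral_const_mul, ind2.integral_mul_eq_mul_integral int_gX2.1 int_ε2.1, IgX2, Iε2]
  have hB : r^2 * ((((k+1)*k*θ^2 - 2*((k+2)*((k+1)*k)*θ^3)) + (k+3)*((k+2)*((k+1)*k))*θ^4) * (v+1))
      - (k*θ)^2 = k * θ^2 := by
    have h := variance_eq_sub memY
    rw [hvar₁, hvar₂] at h
    have h2 : ∫ x, (Y ^ 2) x ∂μ = ∫ ω, Y ω ^ 2 ∂μ := rfl
    rw [h2, hEY2, hmean₁, hmean₂] at h
    linarith
  -- algebra
  have hkθ : k * θ ≠ 0 := by positivity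
  have hθr : (k+1)*r*θ = r - 1 := by
    refine mul_left_cancel₀ hkθ ?_
    linear_combination -hA
  have hk1θ : k * (k+1) * θ^2 ≠ 0 := by positivity
  have hB2 : r^2*(v+1)*(1 - 2*(k+2)*θ + (k+2)*(k+3)*θ^2) = 1 := by
    refine mul_left_cancel₀ hk1θ ?_
    linear_combination hB
  have hQ : (v+1)*((k+3)*r^2 - 4*(k+2)*r + (k+2)*(k+3)) = (k+1)^2 := by
    linear_combination (k+1)^2 * hB2
      + (-(v+1)*(-2*(k+2)*(k+1)*r + (k+2)*(k+3)*((k+1)*r*θ + r - 1))) * hθr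
  have hv1 : (0:ℝ) < v + 1 := by linarith
  have hT : ((k+3)*r - (2*k+4))^2 * (v+1) = (k+1)^2 * (1 - v*(k+2)) := by
    linear_combination (k+3) * hQ
  have hk1 : (0:ℝ) < (k+1)^2 := by positivity
  have h5 : 0 ≤ (k+1)^2 * (1 - v*(k+2)) := hT ▸ mul_nonneg (sq_nonneg _) hv1.le
  have h6 : 0 ≤ 1 - v*(k+2) := nonneg_of_mul_nonneg_right h5 hk1
  have ht0 : 0 ≤ (1 - v*(k+2))/(v+1) := div_nonneg h6 hv1.le
  set s := Real.sqrt ((1 - v*(k+2))/(v+1)) with hs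
  have hs2 : s^2 = (1 - v*(k+2))/(v+1) := Real.sq_sqrt ht0
  have hsq : ((k+1)*s)^2 = ((k+3)*r - (2*k+4))^2 := by
    rw [mul_pow, hs2]
    rw [eq_div_iff hv1.ne'] at hs2
    field_simp
    linear_combination -hT
  have hk3 : (k:ℝ) + 3 ≠ 0 := by positivity
  rcases sq_eq_sq_iff_eq_or_eq_neg.mp hsq with h | h
  · left; field_simp; linarith
  · right; field_simp; linarith
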